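/- The Hankel determinant of q-Pochhammer symbols satisfies det((x;q)_{i+j})_{i,j=0}^{n-1} = q^{2·C(n,3)} · (1-q)^{C(n,2)} · x^{C(n,2)} · product_{j=0}^{n-1} ([j]! · (x;q)_j). -/

import Mathlib

open Finset Matrix

/-- The q-integer `[n] = 1 + q + ... + q^(n-1)`. -/
def qint {R : Type*} [CommRing R] (q : R) (n : ℕ) : R := ∑ i ∈ Finset.range n, q ^ i

/-- The q-factorial `[n]! = [1][2]⋯[n]`. -/
def qfact {R : Type*} [CommRing R] (q : R) (n : ℕ) : R := ∏ i ∈ Finset.range n, qint q (i + 1)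

/-- The Gaussian binomial coefficient, via the q-Pascal recurrence. -/
def qbinom {R : Type*} [CommRing R] (q : R) : ℕ → ℕ → R
  | 0, 0 => 1
  | 0, _ + 1 => 0
  | _ + 1, 0 => 1
  | n + 1, k + 1 => qbinom q n k + q ^ (k + 1) * qbinom q n (k + 1)

/-- The q-Stirling numbers of the second kind:
`S[n,k] = S[n-1,k-1] + [k]·S[n-1,k]`, `S[0,k] = δ_{k0}`, `S[n,0] = δ_{n0}`. -/
def qStirling2 {R : Type*} [CommRing R] (q : R) : ℕ → ℕ → R
  | 0, 0 => 1
  | 0, _ + 1 => 0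
  | _ + 1, 0 => 0
  | n + 1, k + 1 => qStirling2 q n k + qint q (k + 1) * qStirling2 q n (k + 1)

/-- The q-Pochhammer symbol `(a;q)_m = ∏_{j<m} (1 - q^j a)`. -/
def qpoch {R : Type*} [CommRing R] (q a : R) (m : ℕ) : R := ∏ j ∈ Finset.range m, (1 - q ^ j * a)

section HankelAux
variable {R : Type*} [CommRing R] (q a x : R)

lemma qbinom_eq_zero : ∀ {m k : ℕ}, m < k → qbinom q m k = 0
  | 0, _ + 1, _ => rfl
  | m + 1, k + 1, h => by
      show qbinom q m k + q ^ (k+1) * qbinom q m (k+1) = 0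
      rw [qbinom_eq_zero (by omega), qbinom_eq_zero (by omega)]; ring

lemma qbinom_self : ∀ m : ℕ, qbinom q m m = 1
  | 0 => rfl
  | m + 1 => by
      show qbinom q m m + q ^ (m+1) * qbinom q m (m+1) = 1
      rw [qbinom_self m, qbinom_eq_zero q (show m < m + 1 by omega)]; ring

lemma qbinom_zero : ∀ m : ℕ, qbinom q m 0 = 1
  | 0 => rfl
  | _ + 1 => rfl

lemma qpoch_succ' (m : ℕ) : qpoch q a (m + 1) = (1 - a) * qpoch q (q * a) m := by
  rw [qpoch, Finset.prod_range_succ', qpoch]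
  simp only [pow_zero, one_mul, pow_succ]
  rw [mul_comm]
  congr 1
  exact Finset.prod_congr rfl fun j _ => by ring

lemma qpoch_add (i j : ℕ) : qpoch q a (i + j) = qpoch q a i * qpoch q (q ^ i * a) j := by
  rw [qpoch, Finset.prod_range_add, qpoch, qpoch]
  congr 1
  exact Finset.prod_congr rfl fun t _ => by rw [pow_add]; ring

lemma choose_two_succ (k : ℕ) : (k + 1).choose 2 = k.choose 2 + k := by
  rw [Nat.choose_succ_succ]; simp [Nat.choose_one_right, Nat.add_comm]

lemma qbt : ∀ (m : ℕ) (a : R),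
    qpoch q a m = ∑ k ∈ Finset.range (m + 1),
      qbinom q m k * ((-1) ^ k * q ^ k.choose 2 * a ^ k)
  | 0, a => by simp [qpoch, qbinom]
  | m + 1, a => by
    rw [qpoch_succ' q a m, qbt m (q * a)]
    -- expand RHS
    rw [Finset.sum_range_succ' (fun k => qbinom q (m+1) k * ((-1) ^ k * q ^ k.choose 2 * a ^ k)) (m+1)]
    have hb0 : qbinom q (m+1) 0 = 1 := qbinom_zero q (m+1)
    have hrec : ∀ k, qbinom q (m+1) (k+1) = qbinom q m k + q ^ (k+1) * qbinom q m (k+1) :=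
      fun k => rfl
    simp only [hrec, hb0, pow_zero, mul_one, one_mul, add_mul]
    rw [Finset.sum_add_distrib]
    -- LHS expand
    rw [sub_mul, one_mul, Finset.mul_sum]
    rw [Finset.sum_range_succ' (fun k => qbinom q m k * ((-1) ^ k * q ^ k.choose 2 * (q * a) ^ k)) m]
    -- last : drop vanishing top term on RHS second sum
    have hdrop : ∑ k ∈ Finset.range (m+1), q ^ (k+1) * qbinom q m (k+1) * ((-1) ^ (k+1) * q ^ (k+1).choose 2 * a ^ (k+1))
        = ∑ k ∈ Finset.range m, q ^ (k+1) * qbinom q m (k+1) * ((-1) ^ (k+1) * q ^ (k+1).choose 2 * a ^ (k+1)) := by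
      rw [Finset.sum_range_succ, qbinom_eq_zero q (show m < m + 1 by omega)]; ring
    rw [hdrop]
    have hcongr1 : ∑ k ∈ Finset.range (m+1), a * (qbinom q m k * ((-1) ^ k * q ^ k.choose 2 * (q * a) ^ k))
        = ∑ k ∈ Finset.range (m+1), -(qbinom q m k * ((-1) ^ (k+1) * q ^ (k+1).choose 2 * a ^ (k+1))) := by
      refine Finset.sum_congr rfl fun k _ => ?_
      rw [choose_two_succ, pow_add, mul_pow, pow_succ, pow_succ]
      ring
    have hcongr2 : ∑ k ∈ Finset.range m, qbinom q m (k+1) * ((-1) ^ (k+1) * q ^ (k+1).choose 2 * (q * a) ^ (k+1))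
        = ∑ k ∈ Finset.range m, q ^ (k+1) * qbinom q m (k+1) * ((-1) ^ (k+1) * q ^ (k+1).choose 2 * a ^ (k+1)) := by
      refine Finset.sum_congr rfl fun k _ => ?_
      rw [mul_pow]; ring
    rw [hcongr1, hcongr2, Finset.sum_neg_distrib]
    simp only [qbinom_zero, Nat.choose_self, pow_zero, mul_one, one_mul]
    ring

lemma sum_range_id_choose (n : ℕ) : ∑ i ∈ Finset.range n, i = n.choose 2 := by
  induction n with
  | zero => simp
  | succ n ih => rw [Finset.sum_range_succ, ih, Nat.choose_succ_succ]
                 simp [Nat.choose_one_right]; omega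

lemma sum_choose_two (n : ℕ) : ∑ i ∈ Finset.range n, i.choose 2 = n.choose 3 := by
  induction n with
  | zero => simp
  | succ n ih => rw [Finset.sum_range_succ, ih, Nat.choose_succ_succ n 2]; simp only [show Nat.succ 2 = 3 from rfl]; omega

lemma sum_tri (n : ℕ) : ∑ i ∈ Finset.range n, i * (n - 1 - i) = n.choose 3 := by
  induction n with
  | zero => simp
  | succ n ih =>
    rw [Finset.sum_range_succ]
    have h1 : ∀ i ∈ Finset.range n, i * (n + 1 - 1 - i) = i * (n - 1 - i) + i := by
      intro i hi
      rw [Finset.mem_range] at hi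
      have : n + 1 - 1 - i = (n - 1 - i) + 1 := by omega
      rw [this, Nat.mul_succ]
    rw [Finset.sum_congr rfl h1, Finset.sum_add_distrib, ih, sum_range_id_choose,
      Nat.choose_succ_succ n 2]
    simp only [show Nat.succ 2 = 3 from rfl, Nat.add_sub_cancel, Nat.sub_self, Nat.mul_zero]
    omega

lemma sum_rev (n : ℕ) : ∑ i ∈ Finset.range n, (n - 1 - i) = n.choose 2 := by
  rw [Finset.sum_range_reflect (fun i => i) n, sum_range_id_choose]

lemma one_sub_pow (d : ℕ) : (1 : R) - q ^ d = (1 - q) * qint q d := by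
  have := geom_sum_mul q d
  rw [qint]
  linear_combination this

lemma vdm_inner (n : ℕ) (i : Fin n) :
    ∏ j ∈ Finset.Ioi i, (q ^ (j : ℕ) - q ^ (i : ℕ))
      = (-(1 - q) * q ^ (i : ℕ)) ^ (n - 1 - (i : ℕ)) * qfact q (n - 1 - (i : ℕ)) := by
  have hi := i.isLt
  have h1 : ∏ j ∈ Finset.Ioi i, (q ^ (j : ℕ) - q ^ (i : ℕ))
      = ∏ t ∈ Finset.Ioc (i : ℕ) (n - 1), (q ^ t - q ^ (i : ℕ)) := by
    rw [show Finset.Ioc (i : ℕ) (n - 1) = Finset.Ioo (i : ℕ) n by ext t; simp only [Finset.mem_Ioc, Finset.mem_Ioo]; omega,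
      ← Fin.map_valEmbedding_Ioi, Finset.prod_map]; rfl
  have h2 : Finset.Ioc (i : ℕ) (n - 1) = Finset.Ico ((i : ℕ) + 1) n := by
    ext t; simp only [Finset.mem_Ioc, Finset.mem_Ico]; omega
  rw [h1, h2, Finset.prod_Ico_eq_prod_range]
  have h3 : ∀ t ∈ Finset.range (n - ((i : ℕ) + 1)),
      q ^ ((i : ℕ) + 1 + t) - q ^ (i : ℕ) = (-(1 - q) * q ^ (i : ℕ)) * qint q (t + 1) := by
    intro t _
    have := one_sub_pow q (t + 1)
    have hp : q ^ ((i : ℕ) + 1 + t) = q ^ (i : ℕ) * q ^ (t + 1) := by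
      rw [← pow_add]; ring_nf
    rw [hp]
    linear_combination (-(q ^ (i:ℕ))) * this
  rw [Finset.prod_congr rfl h3, Finset.prod_mul_distrib, Finset.prod_const, Finset.card_range]
  have h4 : n - ((i : ℕ) + 1) = n - 1 - (i : ℕ) := by omega
  rw [h4, qfact]

lemma vdm_det (n : ℕ) : (Matrix.vandermonde (fun i : Fin n => q ^ (i : ℕ))).det
    = (-1) ^ n.choose 2 * ((1 - q) ^ n.choose 2 * (q ^ n.choose 3 *
        ∏ j ∈ Finset.range n, qfact q j)) := by
  rw [Matrix.det_vandermonde]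
  have := Finset.prod_congr (rfl : (Finset.univ : Finset (Fin n)) = Finset.univ)
    (fun i _ => vdm_inner q n i)
  rw [this, Fin.prod_univ_eq_prod_range
    (fun i => (-(1 - q) * q ^ i) ^ (n - 1 - i) * qfact q (n - 1 - i)) n,
    Finset.prod_mul_distrib, Finset.prod_range_reflect (fun j => qfact q j) n]
  have h5 : ∀ i ∈ Finset.range n, (-(1 - q) * q ^ i) ^ (n - 1 - i)
      = (-(1 - q)) ^ (n - 1 - i) * q ^ (i * (n - 1 - i)) := by
    intro i _; rw [mul_pow, ← pow_mul]
  rw [Finset.prod_congr rfl h5, Finset.prod_mul_distrib,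
    Finset.prod_pow_eq_pow_sum, Finset.prod_pow_eq_pow_sum, sum_rev, sum_tri, neg_pow]
  ring

theorem hankel_det_qpoch' (n : ℕ) :
    (Matrix.of fun i j : Fin n => qpoch q x ((i : ℕ) + (j : ℕ))).det =
      q ^ (2 * n.choose 3) * (1 - q) ^ n.choose 2 * x ^ n.choose 2 *
        ∏ j ∈ Finset.range n, qfact q j * qpoch q x j := by
  classical
  set T : Matrix (Fin n) (Fin n) R :=
    Matrix.of fun k j : Fin n =>
      qbinom q (j : ℕ) (k : ℕ) * ((-1) ^ (k : ℕ) * q ^ ((k : ℕ).choose 2) * x ^ (k : ℕ)) with hT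
  set D : Matrix (Fin n) (Fin n) R := Matrix.diagonal (fun i : Fin n => qpoch q x (i : ℕ)) with hD
  set W : Matrix (Fin n) (Fin n) R := Matrix.vandermonde (fun i : Fin n => q ^ (i : ℕ)) with hW
  have hM : (Matrix.of fun i j : Fin n => qpoch q x ((i : ℕ) + (j : ℕ))) = D * W * T := by
    ext i j
    rw [Matrix.of_apply, Matrix.mul_apply]
    have step : ∀ k : Fin n, (D * W) i k * T k j
        = qpoch q x (i : ℕ) * (qbinom q (j : ℕ) (k : ℕ) *
            ((-1) ^ (k : ℕ) * q ^ ((k : ℕ).choose 2) * (q ^ (i : ℕ) * x) ^ (k : ℕ))) := by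
      intro k
      rw [hD, hW, hT, Matrix.diagonal_mul, Matrix.vandermonde_apply, Matrix.of_apply, mul_pow,
        ← pow_mul]
      ring
    rw [Finset.sum_congr rfl (fun k _ => step k), ← Finset.mul_sum, qpoch_add, qbt q (j : ℕ) (q ^ (i : ℕ) * x)]
    congr 1
    rw [Fin.sum_univ_eq_sum_range
      (fun k => qbinom q (j : ℕ) k * ((-1) ^ k * q ^ k.choose 2 * (q ^ (i : ℕ) * x) ^ k)) n]
    apply Finset.sum_subset
    · intro t ht
      rw [Finset.mem_range] at *
      have := j.isLt
      omega
    · intro t _ hnt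
      rw [Finset.mem_range] at hnt
      rw [qbinom_eq_zero q (show (j : ℕ) < t by omega)]
      ring
  have hTdet : T.det = ∏ k ∈ Finset.range n, ((-1) ^ k * q ^ k.choose 2 * x ^ k) := by
    rw [Matrix.det_of_upperTriangular]
    · rw [← Fin.prod_univ_eq_prod_range (fun k => ((-1 : R) ^ k * q ^ k.choose 2 * x ^ k)) n]
      refine Finset.prod_congr rfl fun k _ => ?_
      rw [hT, Matrix.of_apply, qbinom_self]
      ring
    · intro a b hab
      rw [hT, Matrix.of_apply, qbinom_eq_zero q (show ((b : ℕ) < (a : ℕ)) from hab)]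
      ring
  have hTdet2 : T.det = (-1) ^ n.choose 2 * q ^ n.choose 3 * x ^ n.choose 2 := by
    have e1 : ∏ k ∈ Finset.range n, ((-1 : R)) ^ k = (-1) ^ n.choose 2 := by
      rw [Finset.prod_pow_eq_pow_sum, sum_range_id_choose]
    have e2 : ∏ k ∈ Finset.range n, q ^ k.choose 2 = q ^ n.choose 3 := by
      rw [Finset.prod_pow_eq_pow_sum, sum_choose_two]
    have e3 : ∏ k ∈ Finset.range n, x ^ k = x ^ n.choose 2 := by
      rw [Finset.prod_pow_eq_pow_sum, sum_range_id_choose]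
    rw [hTdet, Finset.prod_mul_distrib, Finset.prod_mul_distrib, e1, e2, e3]
  rw [hM, Matrix.det_mul, Matrix.det_mul, Matrix.det_diagonal, hW, vdm_det, hTdet2,
    Fin.prod_univ_eq_prod_range (fun i => qpoch q x i) n, Finset.prod_mul_distrib, two_mul,
    pow_add]
  have hneg : ((-1 : R) ^ n.choose 2) * ((-1) ^ n.choose 2) = 1 := by
    rw [← pow_add, ← two_mul, pow_mul]
    norm_num
  linear_combination ((∏ i ∈ Finset.range n, qpoch q x i) * (1 - q) ^ n.choose 2 *
    q ^ n.choose 3 * (∏ j ∈ Finset.range n, qfact q j) * q ^ n.choose 3 * x ^ n.choose 2) * hneg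

end HankelAux

/-- Hankel determinant of the q-Pochhammer symbols `(x;q)_m`. -/
theorem hankel_det_qpoch {R : Type*} [CommRing R] (q x : R) (n : ℕ) :
    (Matrix.of fun i j : Fin n => qpoch q x ((i : ℕ) + (j : ℕ))).det =
      q ^ (2 * n.choose 3) * (1 - q) ^ n.choose 2 * x ^ n.choose 2 *
        ∏ j ∈ Finset.range n, qfact q j * qpoch q x j := by
  exact hankel_det_qpoch' q x n
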